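/- Let F be a field, A a commutative F-algebra, and I ⊆ A an ideal. For every i ≥ 1, the A-module Ω^i_{(A,I)/F} = ker(Ω^i_{A/F} → Ω^i_{(A/I)/F}) is generated as an A-module by the elements a₀·da₁ ∧ ⋯ ∧ da_i with a₀, a₁, …, a_i ∈ A such that a_p ∈ I for at least one index p ∈ {0, 1, …, i}. -/

import Mathlib

open ExteriorAlgebra

section
variable (F A B : Type*) [CommRing F] [CommRing A] [CommRing B]
  [Algebra F A] [Algebra F B] [Algebra A B] [IsScalarTower F A B]

/-- The natural algebra map on exterior algebras of Kähler differentials induced by `A → B`. -/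
noncomputable def kaehlerExtMap :
    ExteriorAlgebra A (Ω[A⁄F]) →ₐ[A] ExteriorAlgebra B (Ω[B⁄F]) :=
  ExteriorAlgebra.lift A
    ⟨((ExteriorAlgebra.ι B).restrictScalars A).comp (KaehlerDifferential.map F F A B),
      fun _ => ExteriorAlgebra.ι_sq_zero _⟩

theorem kaehlerExtMap_mem (i : ℕ) (x : ExteriorAlgebra A (Ω[A⁄F]))
    (hx : x ∈ ⋀[A]^i (Ω[A⁄F])) :
    kaehlerExtMap F A B x ∈ ⋀[B]^i (Ω[B⁄F]) := by
  rw [← ExteriorAlgebra.ιMulti_span_fixedDegree] at hx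
  induction hx using Submodule.span_induction with
  | mem x h =>
      obtain ⟨v, rfl⟩ := h
      have : kaehlerExtMap F A B (ExteriorAlgebra.ιMulti A i v) =
          ExteriorAlgebra.ιMulti B i (fun j => KaehlerDifferential.map F F A B (v j)) := by
        rw [ExteriorAlgebra.ιMulti_apply, ExteriorAlgebra.ιMulti_apply, map_list_prod]
        simp only [List.map_ofFn]
        have hfun : (⇑(kaehlerExtMap F A B) ∘ fun j : Fin i => ExteriorAlgebra.ι A (v j)) =
            fun j : Fin i => ExteriorAlgebra.ι B (KaehlerDifferential.map F F A B (v j)) := by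
          funext j
          exact ExteriorAlgebra.lift_ι_apply (R := A) _ _ (v j)
        rw [hfun]
      rw [this]
      exact ExteriorAlgebra.ιMulti_range B i (Set.mem_range_self _)
  | zero => simp
  | add x y _ _ hx hy => rw [map_add]; exact Submodule.add_mem _ hx hy
  | smul a x _ hx =>
      rw [map_smul, ← IsScalarTower.algebraMap_smul B a (kaehlerExtMap F A B x)]
      exact Submodule.smul_mem _ _ hx

/-- The natural map `Ω^i_{A/F} → Ω^i_{B/F}` on `i`-th exterior powers of Kähler differentials
induced by the `F`-algebra map `A → B`. -/
noncomputable def kaehlerPowMap (i : ℕ) :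
    ⋀[A]^i (Ω[A⁄F]) →ₗ[A] ⋀[B]^i (Ω[B⁄F]) where
  toFun x := ⟨kaehlerExtMap F A B x.1, kaehlerExtMap_mem F A B i x.1 x.2⟩
  map_add' x y := Subtype.ext (by simp)
  map_smul' a x := Subtype.ext (by simp)

end


namespace RelKaehlerAux

section MapLemma
variable (F A B : Type*) [CommRing F] [CommRing A] [CommRing B]
  [Algebra F A] [Algebra F B] [Algebra A B] [IsScalarTower F A B]

lemma kaehlerExtMap_ιMulti {i : ℕ} (v : Fin i → Ω[A⁄F]) :
    kaehlerExtMap F A B (ExteriorAlgebra.ιMulti A i v) =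
      ExteriorAlgebra.ιMulti B i (fun j => KaehlerDifferential.map F F A B (v j)) := by
  rw [ExteriorAlgebra.ιMulti_apply, ExteriorAlgebra.ιMulti_apply, map_list_prod]
  simp only [List.map_ofFn]
  have hfun : (⇑(kaehlerExtMap F A B) ∘ fun j : Fin i => ExteriorAlgebra.ι A (v j)) =
      fun j : Fin i => ExteriorAlgebra.ι B (KaehlerDifferential.map F F A B (v j)) := by
    funext j
    exact ExteriorAlgebra.lift_ι_apply (R := A) _ _ (v j)
  rw [hfun]

end MapLemma

section Main
variable (F A : Type*) [CommRing F] [CommRing A] [Algebra F A] (I : Ideal A)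

local notation "Ω" => KaehlerDifferential F A
local notation "dd" => KaehlerDifferential.D F A
local notation "B" => A ⧸ I
local notation "π" => KaehlerDifferential.map F F A (A ⧸ I)

/-- span of pure wedges of differentials of elements -/
noncomputable def spanM (n : ℕ) : Submodule A (ExteriorAlgebra A Ω) :=
  Submodule.span A {x | ∃ b : Fin n → A, x = ιMulti A n (fun j => dd (b j))}

/-- the generating set of `Ω^n_{(A,I)}` inside the exterior algebra -/
noncomputable def genSet (n : ℕ) : Set (ExteriorAlgebra A Ω) :=
  {x | ∃ a : Fin (n + 1) → A, (∃ p, a p ∈ I) ∧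
    x = a 0 • ιMulti A n (fun j : Fin n => dd (a j.succ))}

/-- span of the generating set -/
noncomputable def SE (n : ℕ) : Submodule A (ExteriorAlgebra A Ω) :=
  Submodule.span A (genSet F A I n)

lemma cons_d_mul {n : ℕ} (a : A) (b : Fin n → A) :
    ι A (dd a) * ιMulti A n (fun j => dd (b j)) =
      ιMulti A (n + 1) (fun j => dd ((Fin.cons a b : Fin (n+1) → A) j)) := by
  rw [ιMulti_succ_apply]
  have h1 : dd ((Fin.cons a b : Fin (n+1) → A) 0) = dd a := by simp
  have h2 : Matrix.vecTail (fun j => dd ((Fin.cons a b : Fin (n+1) → A) j)) =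
      fun j => dd (b j) := by
    funext j; simp [Matrix.vecTail, Function.comp]
  rw [h1, h2]

lemma mul_mem_spanM {n : ℕ} (x : Ω)
    (hx : x ∈ Submodule.span A (Set.range (dd : Derivation F A Ω)))
    (y : ExteriorAlgebra A Ω) (hy : y ∈ spanM F A n) :
    ι A x * y ∈ spanM F A (n + 1) := by
  induction hx using Submodule.span_induction with
  | mem x hx =>
      obtain ⟨a, rfl⟩ := hx
      induction hy using Submodule.span_induction with
      | mem y hy =>
          obtain ⟨b, rfl⟩ := hy
          rw [cons_d_mul]
          exact Submodule.subset_span ⟨fun j => (Fin.cons a b : Fin (n+1) → A) j, rfl⟩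
      | zero => simp
      | add y z _ _ hy hz => rw [mul_add]; exact Submodule.add_mem _ hy hz
      | smul c y _ hy => rw [mul_smul_comm]; exact Submodule.smul_mem _ _ hy
  | zero => simp
  | add x y _ _ hx hy => rw [map_add, add_mul]; exact Submodule.add_mem _ hx hy
  | smul c x _ hx => rw [map_smul, smul_mul_assoc]; exact Submodule.smul_mem _ _ hx

lemma span_ιMulti_le_spanM (n : ℕ) :
    Submodule.span A (Set.range (ιMulti A n (M := Ω))) ≤ spanM F A n := by
  induction n with
  | zero =>
      rw [Submodule.span_le, Set.range_subset_iff]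
      intro v
      refine Submodule.subset_span ⟨Fin.elim0, ?_⟩
      simp [Subsingleton.elim v (fun j : Fin 0 => dd (Fin.elim0 j))]
  | succ n ih =>
      rw [Submodule.span_le, Set.range_subset_iff]
      intro v
      rw [ιMulti_succ_apply]
      have h0 : v 0 ∈ Submodule.span A (Set.range (dd : Derivation F A Ω)) := by
        rw [KaehlerDifferential.span_range_derivation]; trivial
      have h1 : ιMulti A n (Matrix.vecTail v) ∈ spanM F A n :=
        ih (Submodule.subset_span (Set.mem_range_self _))
      exact mul_mem_spanM F A _ h0 _ h1

lemma smul_spanM_mem_SE {n : ℕ} {c : A} (hc : c ∈ I) {x : ExteriorAlgebra A Ω}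
    (hx : x ∈ spanM F A n) : c • x ∈ SE F A I n := by
  induction hx using Submodule.span_induction with
  | mem y hy =>
      obtain ⟨b, rfl⟩ := hy
      exact Submodule.subset_span ⟨Fin.cons c b, ⟨0, by simpa using hc⟩, by simp⟩
  | zero => simp
  | add y z _ _ hy hz => rw [smul_add]; exact Submodule.add_mem _ hy hz
  | smul a y _ hy =>
      rw [smul_comm]
      exact Submodule.smul_mem _ _ hy

lemma smul_pow_mem_SE {n : ℕ} {c : A} (hc : c ∈ I) {x : ExteriorAlgebra A Ω}
    (hx : x ∈ ⋀[A]^n Ω) : c • x ∈ SE F A I n := by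
  rw [← ιMulti_span_fixedDegree] at hx
  exact smul_spanM_mem_SE F A I hc (span_ιMulti_le_spanM F A n hx)

lemma d_mul_mem_SE {n : ℕ} {c : A} (hc : c ∈ I) {y : ExteriorAlgebra A Ω}
    (hy : y ∈ spanM F A n) : ι A (dd c) * y ∈ SE F A I (n + 1) := by
  induction hy using Submodule.span_induction with
  | mem y hy =>
      obtain ⟨b, rfl⟩ := hy
      rw [cons_d_mul]
      refine Submodule.subset_span ⟨Fin.cons 1 (Fin.cons c b), ⟨⟨1, by simpa using hc⟩, ?_⟩⟩
      simp
  | zero => simp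
  | add y z _ _ hy hz => rw [mul_add]; exact Submodule.add_mem _ hy hz
  | smul a y _ hy => rw [mul_smul_comm]; exact Submodule.smul_mem _ _ hy

lemma slot_d_mem_SE {n : ℕ} {c : A} (hc : c ∈ I) (v : Fin (n + 1) → Ω) (p : Fin (n + 1))
    (hp : v p = dd c) : ιMulti A (n + 1) v ∈ SE F A I (n + 1) := by
  have key : ∀ w : Fin (n + 1) → Ω, w 0 = dd c →
      ιMulti A (n + 1) w ∈ SE F A I (n + 1) := by
    intro w hw
    rw [ιMulti_succ_apply, hw]
    exact d_mul_mem_SE F A I hc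
      (span_ιMulti_le_spanM F A n (Submodule.subset_span (Set.mem_range_self _)))
  by_cases h0 : p = 0
  · exact key v (h0 ▸ hp)
  · have hswap := AlternatingMap.map_swap (ιMulti A (n + 1) (M := Ω)) v (Ne.symm h0)
    have : ιMulti A (n + 1) v = - ιMulti A (n + 1) (v ∘ Equiv.swap 0 p) := by
      rw [hswap, neg_neg]
    rw [this]
    refine neg_mem (key _ ?_)
    simp [Equiv.swap_apply_left, hp]

/-- the classical generators of the kernel of `Ω[A⁄F] → Ω[(A⧸I)⁄F]` -/
noncomputable def TT : Submodule A Ω :=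
  Submodule.span A ({x | ∃ c ∈ I, ∃ a : A, x = c • dd a} ∪ {x | ∃ c ∈ I, x = dd c})

lemma smul_mem_TT {c : A} (hc : c ∈ I) (x : Ω) : c • x ∈ TT F A I := by
  have hx : x ∈ Submodule.span A (Set.range (dd : Derivation F A Ω)) := by
    rw [KaehlerDifferential.span_range_derivation]; trivial
  induction hx using Submodule.span_induction with
  | mem y hy =>
      obtain ⟨a, rfl⟩ := hy
      exact Submodule.subset_span (Or.inl ⟨c, hc, a, rfl⟩)
  | zero => simp
  | add y z _ _ hy hz => rw [smul_add]; exact Submodule.add_mem _ hy hz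
  | smul a y _ hy => rw [smul_comm]; exact Submodule.smul_mem _ _ hy

lemma isTorsionBySet_TT :
    Module.IsTorsionBySet A (Ω ⧸ TT F A I) (I : Set A) := by
  rw [Module.isTorsionBySet_quotient_iff]
  exact fun x r hr => smul_mem_TT F A I hr x

lemma d_mem_TT {c : A} (hc : c ∈ I) : dd c ∈ TT F A I :=
  Submodule.subset_span (Or.inr ⟨c, hc, rfl⟩)

/-- the `F`-linear map `A ⧸ I →ₗ[F] Ω ⧸ TT` sending `mk a` to `[da]`. -/
noncomputable def deltaBar : B →ₗ[F] (Ω ⧸ TT F A I) :=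
  ((I.restrictScalars F).liftQ
      (((TT F A I).mkQ.restrictScalars F) ∘ₗ (dd : Derivation F A Ω).toLinearMap)
      (by
        intro x hx
        simp only [LinearMap.mem_ker, LinearMap.comp_apply, LinearMap.restrictScalars_apply]
        rw [Submodule.mkQ_apply, Submodule.Quotient.mk_eq_zero]
        exact d_mem_TT F A I hx)) ∘ₗ
    (Submodule.Quotient.restrictScalarsEquiv F I).symm.toLinearMap

lemma deltaBar_mk (a : A) :
    deltaBar F A I (Ideal.Quotient.mk I a) = (TT F A I).mkQ (dd a) := by
  have : (Submodule.Quotient.restrictScalarsEquiv F I).symm (Ideal.Quotient.mk I a) =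
      Submodule.Quotient.mk a := by
    apply (Submodule.Quotient.restrictScalarsEquiv F I).injective
    simp [Submodule.Quotient.restrictScalarsEquiv_mk]
  simp only [deltaBar, LinearMap.comp_apply, LinearEquiv.coe_toLinearMap, this]
  rfl

/-- the induced derivation on `B = A ⧸ I` with values in `Ω ⧸ TT`. -/
noncomputable def derivBar :
    letI := (isTorsionBySet_TT F A I).module
    Derivation F B (Ω ⧸ TT F A I) := by
  letI := (isTorsionBySet_TT F A I).module
  refine ⟨deltaBar F A I, ?_, ?_⟩
  · show deltaBar F A I (Ideal.Quotient.mk I 1) = 0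
    rw [deltaBar_mk]
    simp
  · intro x y
    obtain ⟨a, rfl⟩ := Ideal.Quotient.mk_surjective x
    obtain ⟨b, rfl⟩ := Ideal.Quotient.mk_surjective y
    rw [← map_mul, deltaBar_mk, deltaBar_mk, deltaBar_mk]
    rw [(isTorsionBySet_TT F A I).mk_smul, (isTorsionBySet_TT F A I).mk_smul]
    rw [Derivation.leibniz, map_add, map_smul, map_smul]

lemma ker_map_le_TT :
    LinearMap.ker (KaehlerDifferential.map F F A B) ≤ TT F A I := by
  letI := (isTorsionBySet_TT F A I).module
  haveI : IsScalarTower A B (Ω ⧸ TT F A I) :=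
    Module.IsTorsionBySet.isScalarTower (isTorsionBySet_TT F A I)
  set e := (derivBar F A I).liftKaehlerDifferential with he
  have key : ∀ x : Ω, e (KaehlerDifferential.map F F A B x) = (TT F A I).mkQ x := by
    intro x
    have hx : x ∈ Submodule.span A (Set.range (dd : Derivation F A Ω)) := by
      rw [KaehlerDifferential.span_range_derivation]; trivial
    induction hx using Submodule.span_induction with
    | mem y hy =>
        obtain ⟨a, rfl⟩ := hy
        rw [KaehlerDifferential.map_D]
        rw [Derivation.liftKaehlerDifferential_comp_D]
        show deltaBar F A I (algebraMap A B a) = _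
        rw [Ideal.Quotient.algebraMap_eq, deltaBar_mk]
    | zero => simp
    | add y z _ _ hy hz => rw [map_add, map_add, hy, hz, map_add]
    | smul a y _ hy =>
        have h1 : KaehlerDifferential.map F F A B (a • y) =
            algebraMap A B a • KaehlerDifferential.map F F A B y := by
          rw [map_smul, IsScalarTower.algebraMap_smul]
        rw [h1, map_smul, hy, Ideal.Quotient.algebraMap_eq,
          (isTorsionBySet_TT F A I).mk_smul, ← map_smul]
  intro x hx
  rw [LinearMap.mem_ker] at hx
  have := key x
  rw [hx, map_zero] at this
  rwa [eq_comm, Submodule.mkQ_apply, Submodule.Quotient.mk_eq_zero] at this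

/-- an element of the exterior power with one slot in the kernel lies in `SE`. -/
lemma ιMulti_mem_SE_of_ker {n : ℕ} (v : Fin (n + 1) → Ω) (p : Fin (n + 1))
    (hv : v p ∈ LinearMap.ker π) : ιMulti A (n + 1) v ∈ SE F A I (n + 1) := by
  classical
  set ℓ : Ω →ₗ[A] ExteriorAlgebra A Ω :=
    { toFun := fun x => ιMulti A (n + 1) (Function.update v p x)
      map_add' := fun x y => AlternatingMap.map_update_add _ v p x y
      map_smul' := fun c x => AlternatingMap.map_update_smul _ v p c x } with hℓ
  have hTT : Submodule.span A
      ({x | ∃ c ∈ I, ∃ a : A, x = c • dd a} ∪ {x | ∃ c ∈ I, x = dd c}) ≤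
      Submodule.comap ℓ (SE F A I (n + 1)) := by
    rw [Submodule.span_le]
    rintro x (⟨c, hc, a, rfl⟩ | ⟨c, hc, rfl⟩)
    · have : ℓ (c • dd a) = c • ιMulti A (n + 1) (Function.update v p (dd a)) := by
        rw [map_smul]; rfl
      simp only [SetLike.mem_coe, Submodule.mem_comap, this]
      exact smul_pow_mem_SE F A I hc
        (ExteriorAlgebra.ιMulti_range A (n + 1) (Set.mem_range_self _))
    · simp only [SetLike.mem_coe, Submodule.mem_comap]
      exact slot_d_mem_SE F A I hc _ p (Function.update_self p (dd c) v)
  have hx : ℓ (v p) ∈ SE F A I (n + 1) := hTT (ker_map_le_TT F A I hv)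
  simpa only [hℓ, LinearMap.coe_mk, AddHom.coe_mk, Function.update_eq_self] using hx

/-- the span inside the `n`-th exterior power (as a submodule of the subtype). -/
noncomputable def SP (n : ℕ) : Submodule A (⋀[A]^n Ω) :=
  Submodule.span A {ω : ⋀[A]^n Ω | (ω : ExteriorAlgebra A Ω) ∈ genSet F A I n}

lemma genSet_subset_pow (n : ℕ) : genSet F A I n ⊆ (⋀[A]^n Ω : Submodule A _) := by
  rintro x ⟨a, _, rfl⟩
  exact Submodule.smul_mem _ _ (ExteriorAlgebra.ιMulti_range A n (Set.mem_range_self _))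

lemma map_SP (n : ℕ) : (SP F A I n).map (⋀[A]^n Ω).subtype = SE F A I n := by
  rw [SP, Submodule.map_span]
  congr 1
  ext x
  constructor
  · rintro ⟨ω, hω, rfl⟩; exact hω
  · intro hx
    exact ⟨⟨x, genSet_subset_pow F A I n hx⟩, hx, rfl⟩

lemma mem_SP_iff {n : ℕ} (x : ⋀[A]^n Ω) :
    x ∈ SP F A I n ↔ (x : ExteriorAlgebra A Ω) ∈ SE F A I n := by
  constructor
  · intro hx
    rw [← map_SP]
    exact Submodule.mem_map_of_mem hx
  · intro hx
    rw [← map_SP] at hx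
    obtain ⟨y, hy, hyx⟩ := hx
    have : y = x := Subtype.ext hyx
    rwa [this] at hy

lemma isTorsionBySet_SP (n : ℕ) :
    Module.IsTorsionBySet A ((⋀[A]^n Ω) ⧸ SP F A I n) (I : Set A) := by
  rw [Module.isTorsionBySet_quotient_iff]
  intro x r hr
  rw [mem_SP_iff]
  exact smul_pow_mem_SE F A I hr x.2

/-- `ιMulti` with codomain the exterior power, composed with the quotient by `SP`. -/
noncomputable def alphaQ (n : ℕ) :
    Ω [⋀^Fin n]→ₗ[A] ((⋀[A]^n Ω) ⧸ SP F A I n) :=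
  (SP F A I n).mkQ.compAlternatingMap
    ((ιMulti A n).codRestrict (⋀[A]^n Ω) (fun v => ExteriorAlgebra.ιMulti_range A n
      (Set.mem_range_self v)))

lemma alphaQ_apply {n : ℕ} (v : Fin n → Ω) :
    alphaQ F A I n v = (SP F A I n).mkQ
      ⟨ιMulti A n v, ExteriorAlgebra.ιMulti_range A n (Set.mem_range_self v)⟩ := rfl

lemma alphaQ_eq_zero_of_ker {n : ℕ} (v : Fin (n + 1) → Ω) (p : Fin (n + 1))
    (hv : v p ∈ LinearMap.ker π) : alphaQ F A I (n + 1) v = 0 := by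
  rw [alphaQ_apply, Submodule.mkQ_apply, Submodule.Quotient.mk_eq_zero, mem_SP_iff]
  exact ιMulti_mem_SE_of_ker F A I v p hv

lemma alphaQ_congr_ker {n : ℕ} (v w : Fin (n + 1) → Ω)
    (h : ∀ j, π (v j) = π (w j)) : alphaQ F A I (n + 1) v = alphaQ F A I (n + 1) w := by
  classical
  have main : ∀ t : ℕ, t ≤ n + 1 →
      alphaQ F A I (n + 1) (fun j => if (j : ℕ) < t then w j else v j) =
        alphaQ F A I (n + 1) v := by
    intro t
    induction t with
    | zero => intro _; simp
    | succ t ih =>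
        intro ht
        have ht' : t ≤ n + 1 := Nat.le_of_succ_le ht
        set pt : Fin (n + 1) := ⟨t, ht⟩ with hpt
        set u : Fin (n + 1) → Ω := fun j => if (j : ℕ) < t then w j else v j with hu
        have hexp : (fun j : Fin (n + 1) => if (j : ℕ) < t + 1 then w j else v j) =
            Function.update u pt (w pt) := by
          funext j
          by_cases hj : j = pt
          · subst hj
            simp [Function.update_self, Nat.lt_succ_iff, hpt]
          · rw [Function.update_of_ne hj, hu]
            have hjt : (j : ℕ) ≠ t := fun hc => hj (Fin.ext (by simp [hpt, hc]))
            simp only []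
            congr 1
            simp only [eq_iff_iff]
            omega
        have hupt : u pt = v pt := by simp [hu, hpt]
        have hsub := (alphaQ F A I (n + 1)).map_update_sub u pt (w pt) (v pt)
        have hzero : alphaQ F A I (n + 1) (Function.update u pt (w pt - v pt)) = 0 := by
          refine alphaQ_eq_zero_of_ker F A I _ pt ?_
          rw [Function.update_self, LinearMap.mem_ker, map_sub, h pt, sub_self]
        rw [hzero] at hsub
        have hXY : alphaQ F A I (n + 1) (Function.update u pt (w pt)) =
            alphaQ F A I (n + 1) (Function.update u pt (v pt)) :=
          sub_eq_zero.mp hsub.symm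
        rw [hexp, hXY, ← hupt, Function.update_eq_self]
        exact ih ht'
  have hfin := main (n + 1) le_rfl
  have : (fun j : Fin (n + 1) => if (j : ℕ) < n + 1 then w j else v j) = w := by
    funext j; simp [j.isLt]
  rw [this] at hfin
  exact hfin.symm

lemma pi_surjective : Function.Surjective (π : Ω →ₗ[A] Ω[B⁄F]) :=
  KaehlerDifferential.map_surjective_of_surjective F F A (A ⧸ I)
    (by rw [Ideal.Quotient.algebraMap_eq]; exact Ideal.Quotient.mk_surjective)

/-- a set-theoretic section of `π`. -/
noncomputable def sSec : Ω[B⁄F] → Ω := Function.surjInv (pi_surjective F A I)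

lemma sSec_spec (y : Ω[B⁄F]) : π (sSec F A I y) = y :=
  Function.surjInv_eq (pi_surjective F A I) y

lemma sSec_update {n : ℕ} {_inst : DecidableEq (Fin (n + 1))} (w : Fin (n + 1) → Ω[B⁄F])
    (j : Fin (n + 1)) (z : Ω[B⁄F]) :
    (fun k => sSec F A I (Function.update w j z k)) =
      Function.update (fun k => sSec F A I (w k)) j (sSec F A I z) := by
  funext k
  by_cases hk : k = j
  · subst hk; simp
  · rw [Function.update_of_ne hk, Function.update_of_ne hk]

/-- The alternating map over `B` reversing the exterior power map. -/
noncomputable def fAlt (n : ℕ) :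
    letI := (isTorsionBySet_SP F A I (n + 1)).module
    Ω[B⁄F] [⋀^Fin (n + 1)]→ₗ[B] ((⋀[A]^(n+1) Ω) ⧸ SP F A I (n + 1)) := by
  letI := (isTorsionBySet_SP F A I (n + 1)).module
  classical
  refine ⟨⟨fun w => alphaQ F A I (n + 1) (fun j => sSec F A I (w j)), ?_, ?_⟩, ?_⟩
  · intro _ w j x y
    rw [sSec_update, sSec_update, sSec_update]
    have h1 : alphaQ F A I (n + 1)
        (Function.update (fun k => sSec F A I (w k)) j (sSec F A I (x + y))) =
        alphaQ F A I (n + 1)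
        (Function.update (fun k => sSec F A I (w k)) j (sSec F A I x + sSec F A I y)) := by
      refine alphaQ_congr_ker F A I _ _ (fun k => ?_)
      by_cases hk : k = j
      · subst hk; simp [Function.update_self, sSec_spec, map_add]
      · rw [Function.update_of_ne hk, Function.update_of_ne hk]
    rw [h1]
    exact AlternatingMap.map_update_add _ _ j _ _
  · intro _ w j b x
    obtain ⟨a, rfl⟩ := Ideal.Quotient.mk_surjective b
    rw [sSec_update, sSec_update]
    have h1 : alphaQ F A I (n + 1)
        (Function.update (fun k => sSec F A I (w k)) j
          (sSec F A I (Ideal.Quotient.mk I a • x))) =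
        alphaQ F A I (n + 1)
        (Function.update (fun k => sSec F A I (w k)) j (a • sSec F A I x)) := by
      refine alphaQ_congr_ker F A I _ _ (fun k => ?_)
      by_cases hk : k = j
      · subst hk
        simp only [Function.update_self, sSec_spec, map_smul]
        rw [← IsScalarTower.algebraMap_smul B a x, Ideal.Quotient.algebraMap_eq]
      · rw [Function.update_of_ne hk, Function.update_of_ne hk]
    rw [h1, AlternatingMap.map_update_smul, (isTorsionBySet_SP F A I (n + 1)).mk_smul]
  · intro w j k hjk hne
    exact (alphaQ F A I (n + 1)).map_eq_zero_of_eq _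
      (by rw [hjk] : sSec F A I (w j) = sSec F A I (w k)) hne

/-- the linear map from the exterior algebra over `B` splitting things. -/
noncomputable def gLift (n : ℕ) :
    letI := (isTorsionBySet_SP F A I (n + 1)).module
    ExteriorAlgebra B (Ω[B⁄F]) →ₗ[B] ((⋀[A]^(n+1) Ω) ⧸ SP F A I (n + 1)) := by
  letI := (isTorsionBySet_SP F A I (n + 1)).module
  classical
  exact ExteriorAlgebra.liftAlternating
    (Function.update (fun m => (0 : Ω[B⁄F] [⋀^Fin m]→ₗ[B] _)) (n + 1) (fAlt F A I n))

lemma gLift_ιMulti (n : ℕ) (w : Fin (n + 1) → Ω[B⁄F]) :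
    gLift F A I n (ιMulti B (n + 1) w) =
      alphaQ F A I (n + 1) (fun j => sSec F A I (w j)) := by
  classical
  letI := (isTorsionBySet_SP F A I (n + 1)).module
  rw [gLift, ExteriorAlgebra.liftAlternating_apply_ιMulti, Function.update_self]
  rfl

lemma gLift_kaehlerExtMap (n : ℕ) (x : ⋀[A]^(n+1) Ω) :
    gLift F A I n (kaehlerExtMap F A (A ⧸ I) (x : ExteriorAlgebra A Ω)) =
      (SP F A I (n + 1)).mkQ x := by
  letI := (isTorsionBySet_SP F A I (n + 1)).module
  have hx : (x : ExteriorAlgebra A Ω) ∈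
      Submodule.span A (Set.range (ιMulti A (n + 1) (M := Ω))) := by
    rw [ExteriorAlgebra.ιMulti_span_fixedDegree]; exact x.2
  have key : ∀ y (hy : y ∈ Submodule.span A (Set.range (ιMulti A (n + 1) (M := Ω)))),
      gLift F A I n (kaehlerExtMap F A (A ⧸ I) y) = (SP F A I (n + 1)).mkQ
        ⟨y, by rw [← ExteriorAlgebra.ιMulti_span_fixedDegree]; exact hy⟩ := by
    intro y hy
    induction hy using Submodule.span_induction with
    | mem z hz =>
        obtain ⟨v, rfl⟩ := hz
        rw [kaehlerExtMap_ιMulti, gLift_ιMulti]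
        rw [alphaQ_congr_ker F A I _ v (fun j => sSec_spec F A I _)]
        rw [alphaQ_apply]
    | zero =>
        rw [map_zero, map_zero]
        rfl
    | add y z hy' hz' ihy ihz =>
        rw [map_add, map_add, ihy, ihz, ← map_add]
        rfl
    | smul a y hy' ih =>
        rw [map_smul, ← IsScalarTower.algebraMap_smul B a
          (kaehlerExtMap F A (A ⧸ I) y), map_smul, ih, Ideal.Quotient.algebraMap_eq,
          (isTorsionBySet_SP F A I (n + 1)).mk_smul, ← map_smul]
        rfl
  have := key _ hx
  convert this using 2

end Main

end RelKaehlerAux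

open RelKaehlerAux in
/-- For a field `F`, a commutative `F`-algebra `A` and an ideal `I ⊆ A`,
for every `i ≥ 1` the kernel `Ω^i_{(A,I)/F}` of the natural map `Ω^i_{A/F} → Ω^i_{(A/I)/F}`
is generated as an `A`-module by the elements `a₀·da₁ ∧ ⋯ ∧ da_i` with some `a_p ∈ I`. -/
theorem relative_kaehler_power_generated_by
    (F A : Type*) [Field F] [CommRing A] [Algebra F A] (I : Ideal A) (i : ℕ) (hi : 1 ≤ i) :
    LinearMap.ker (kaehlerPowMap F A (A ⧸ I) i) =
      Submodule.span A
        {ω : ⋀[A]^i (Ω[A⁄F]) | ∃ a : Fin (i + 1) → A, (∃ p, a p ∈ I) ∧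
          (ω : ExteriorAlgebra A (Ω[A⁄F])) =
            a 0 • ExteriorAlgebra.ιMulti A i
              (fun j : Fin i => KaehlerDifferential.D F A (a j.succ))} := by
  obtain ⟨n, rfl⟩ : ∃ n, i = n + 1 := ⟨i - 1, (Nat.succ_pred_eq_of_pos hi).symm⟩
  have hset : {ω : ⋀[A]^(n+1) (Ω[A⁄F]) | ∃ a : Fin (n + 1 + 1) → A, (∃ p, a p ∈ I) ∧
      (ω : ExteriorAlgebra A (Ω[A⁄F])) =
        a 0 • ExteriorAlgebra.ιMulti A (n+1)
          (fun j : Fin (n+1) => KaehlerDifferential.D F A (a j.succ))} =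
      {ω : ⋀[A]^(n+1) (Ω[A⁄F]) |
        (ω : ExteriorAlgebra A (Ω[A⁄F])) ∈ genSet F A I (n + 1)} := rfl
  rw [hset]
  apply le_antisymm
  · intro x hx
    rw [LinearMap.mem_ker] at hx
    have h1 : kaehlerExtMap F A (A ⧸ I) (x : ExteriorAlgebra A (Ω[A⁄F])) = 0 :=
      congrArg Subtype.val hx
    have hg := gLift_kaehlerExtMap F A I n x
    rw [h1, map_zero] at hg
    exact (Submodule.Quotient.mk_eq_zero _).mp hg.symm
  · rw [Submodule.span_le]
    rintro ω ⟨a, ⟨p, hp⟩, hval⟩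
    rw [SetLike.mem_coe, LinearMap.mem_ker]
    apply Subtype.ext
    show kaehlerExtMap F A (A ⧸ I) (ω : ExteriorAlgebra A (Ω[A⁄F])) = 0
    rw [hval, map_smul, kaehlerExtMap_ιMulti]
    rcases Fin.eq_zero_or_eq_succ p with rfl | ⟨q, rfl⟩
    · rw [← IsScalarTower.algebraMap_smul (A ⧸ I) (a 0), Ideal.Quotient.algebraMap_eq,
        Ideal.Quotient.eq_zero_iff_mem.mpr hp, zero_smul]
    · have hzero : (fun j : Fin (n+1) => KaehlerDifferential.map F F A (A ⧸ I)
          (KaehlerDifferential.D F A (a j.succ))) q = 0 := by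
        show KaehlerDifferential.map F F A (A ⧸ I)
          (KaehlerDifferential.D F A (a q.succ)) = 0
        rw [KaehlerDifferential.map_D, Ideal.Quotient.algebraMap_eq,
          Ideal.Quotient.eq_zero_iff_mem.mpr hp, map_zero]
      rw [AlternatingMap.map_coord_zero _ q hzero, smul_zero]
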